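/- Let p be an odd prime, n ≥ 1, Δ > 0, and f : 𝔽_p^n → [0,1]. Let V be an 𝔽_p-subspace of 𝔽_p^n containing every a ∈ 𝔽_p^n with |f̂(a)| > Δ·p^n, and let W = V^⊥ = {w ∈ 𝔽_p^n : w·v = 0 for all v ∈ V} be its orthogonal complement with respect to the standard dot product. Then Λ₃(f_W) ≤ Λ₃(f) + Δ. -/

import Mathlib

open scoped Classical

noncomputable def lambda3 {p n : ℕ} [NeZero p] (f : (Fin n → ZMod p) → ℝ) : ℝ :=
  (∑ m : Fin n → ZMod p, ∑ d : Fin n → ZMod p, f m * f (m + d) * f (m + 2 • d)) / (p : ℝ) ^ (2 * n)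

noncomputable def avgW {p n : ℕ} [NeZero p] (W : Submodule (ZMod p) (Fin n → ZMod p))
    (f : (Fin n → ZMod p) → ℝ) (m : Fin n → ZMod p) : ℝ :=
  (∑ w : W, f (m + ↑w)) / (Nat.card W : ℝ)

noncomputable def ft {p n : ℕ} [NeZero p] (f : (Fin n → ZMod p) → ℝ)
    (a : Fin n → ZMod p) : ℂ :=
  ∑ m : Fin n → ZMod p, (f m : ℂ) *
    Complex.exp (2 * Real.pi * Complex.I * ((dotProduct a m).val : ℂ) / p)


section aux
variable {p : ℕ} [NeZero p]

noncomputable def ee (x : ZMod p) : ℂ :=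
  Complex.exp (2 * Real.pi * Complex.I * (x.val : ℂ) / p)

omit [NeZero p] in
lemma ee_zero : ee (0 : ZMod p) = 1 := by simp [ee]

omit [NeZero p] in
lemma ee_zero' (x : ZMod p) (h : x = 0) : ee x = 1 := by rw [h, ee_zero]

lemma ee_add (x y : ZMod p) : ee (x + y) = ee x * ee y := by
  have hp : (p : ℂ) ≠ 0 := by exact_mod_cast (NeZero.ne p)
  have hnat : x.val + y.val = (x + y).val + p * ((x.val + y.val) / p) := by
    rw [ZMod.val_add]; exact (Nat.mod_add_div _ _).symm
  have hc : ((x.val + y.val : ℕ) : ℂ) = (((x + y).val + p * ((x.val + y.val) / p) : ℕ) : ℂ) :=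
    congrArg _ hnat
  simp only [Nat.cast_add, Nat.cast_mul] at hc
  have key : ((x.val : ℂ) + (y.val : ℂ)) / p
      = ((x + y).val : ℂ) / p + (((x.val + y.val) / p : ℕ) : ℂ) := by
    rw [hc, add_div, mul_div_cancel_left₀ _ hp]
  rw [ee, ee, ee, ← Complex.exp_add, Complex.exp_eq_exp_iff_exists_int]
  refine ⟨-(((x.val + y.val) / p : ℕ) : ℤ), ?_⟩
  rw [Int.cast_neg, Int.cast_natCast]
  linear_combination (-(2 * (Real.pi : ℂ) * Complex.I)) * key

lemma ee_ne_one {x : ZMod p} (hx : x ≠ 0) : ee x ≠ 1 := by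
  intro h
  rw [ee, Complex.exp_eq_one_iff] at h
  obtain ⟨k, hk⟩ := h
  have hp : (p : ℂ) ≠ 0 := by exact_mod_cast (NeZero.ne p)
  have h2 : (2 : ℂ) * Real.pi * Complex.I ≠ 0 := by
    simp [Real.pi_ne_zero, Complex.I_ne_zero, Complex.ofReal_ne_zero]
  rw [div_eq_iff hp] at hk
  have hv : (x.val : ℂ) = (k : ℂ) * p := by
    refine mul_left_cancel₀ h2 ?_
    linear_combination hk
  have hz : (x.val : ℤ) = k * p := by exact_mod_cast hv
  have hdvd' : p ∣ x.val := by
    have hdvd : (p : ℤ) ∣ (x.val : ℤ) := ⟨k, by linarith [hz]⟩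
    exact_mod_cast hdvd
  have hvzero : x.val = 0 := Nat.eq_zero_of_dvd_of_lt hdvd' (ZMod.val_lt x)
  exact hx ((ZMod.val_eq_zero x).mp hvzero)

omit [NeZero p] in
lemma ee_ne_zero (x : ZMod p) : ee x ≠ 0 := Complex.exp_ne_zero _

lemma ee_neg (x : ZMod p) : ee (-x) = (ee x)⁻¹ := by
  refine eq_inv_of_mul_eq_one_left ?_
  rw [← ee_add, neg_add_cancel, ee_zero]

omit [NeZero p] in
lemma ee_abs (x : ZMod p) : ‖ee x‖ = 1 := by
  rw [ee]
  have : (2 * Real.pi * Complex.I * (x.val : ℂ) / p)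
      = ((2 * Real.pi * x.val / p : ℝ) : ℂ) * Complex.I := by
    push_cast
    ring
  rw [this, Complex.norm_exp_ofReal_mul_I]

lemma ee_conj (x : ZMod p) : (starRingEnd ℂ) (ee x) = ee (-x) := by
  rw [ee_neg]
  refine eq_inv_of_mul_eq_one_left ?_
  have : (starRingEnd ℂ) (ee x) * ee x = ((Complex.normSq (ee x) : ℝ) : ℂ) := by
    rw [mul_comm, Complex.mul_conj]
  rw [this, Complex.normSq_eq_norm_sq, ee_abs]
  norm_num

variable {n : ℕ}

noncomputable def chiA (b : Fin n → ZMod p) : AddChar (Fin n → ZMod p) ℂ where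
  toFun a := ee (dotProduct a b)
  map_zero_eq_one' := by
    show ee (dotProduct 0 b) = 1
    rw [zero_dotProduct, ee_zero]
  map_add_eq_mul' a a' := by
    show ee (dotProduct (a + a') b)
      = ee (dotProduct a b) * ee (dotProduct a' b)
    rw [add_dotProduct, ee_add]

lemma sum_ee_dot (b : Fin n → ZMod p) :
    ∑ a : Fin n → ZMod p, ee (dotProduct a b)
      = if b = 0 then ((p : ℂ)) ^ n else 0 := by
  split_ifs with h
  · subst h
    simp only [dotProduct_zero, ee_zero, Finset.sum_const, Finset.card_univ, nsmul_eq_mul,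
      mul_one]
    simp [ZMod.card]
  · have hne : chiA b ≠ 1 := by
      rw [AddChar.ne_one_iff]
      obtain ⟨i, hi⟩ := Function.ne_iff.mp h
      refine ⟨Pi.single i 1, ?_⟩
      show ee (dotProduct (Pi.single i 1) b) ≠ 1
      rw [single_dotProduct, one_mul]
      exact ee_ne_one (by simpa using hi)
    exact AddChar.sum_eq_zero_of_ne_one hne

lemma sum_ee_W (W : Submodule (ZMod p) (Fin n → ZMod p)) (a : Fin n → ZMod p) :
    ∑ w : W, ee (dotProduct a (w : Fin n → ZMod p))
      = if (∀ w ∈ W, dotProduct a w = 0) then (Nat.card W : ℂ) else 0 := by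
  split_ifs with h
  · rw [Finset.sum_congr rfl (fun w _ => by rw [ee_zero' _ (h w w.2)])]
    simp [Nat.card_eq_fintype_card]
  · have hψ : (⟨fun w : W => ee (dotProduct a (w : Fin n → ZMod p)),
        by show ee (dotProduct a ((0 : W) : Fin n → ZMod p)) = 1
           rw [Submodule.coe_zero, dotProduct_zero, ee_zero],
        fun w w' => by
           show ee (dotProduct a ((w + w' : W) : Fin n → ZMod p)) = _
           rw [Submodule.coe_add, dotProduct_add, ee_add]⟩ :
          AddChar W ℂ) ≠ 1 := by
      rw [AddChar.ne_one_iff]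
      push_neg at h
      obtain ⟨w, hw, hne⟩ := h
      exact ⟨⟨w, hw⟩, ee_ne_one hne⟩
    exact AddChar.sum_eq_zero_of_ne_one hψ

lemma ft_apply (f : (Fin n → ZMod p) → ℝ) (a : Fin n → ZMod p) :
    ft f a = ∑ m, (f m : ℂ) * ee (dotProduct a m) := rfl

lemma conj_ft (f : (Fin n → ZMod p) → ℝ) (a : Fin n → ZMod p) :
    (starRingEnd ℂ) (ft f a) = ∑ m, (f m : ℂ) * ee (-(dotProduct a m)) := by
  rw [ft_apply, map_sum]
  exact Finset.sum_congr rfl fun m _ => by rw [map_mul, Complex.conj_ofReal, ee_conj]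

lemma parseval_c (f : (Fin n → ZMod p) → ℝ) :
    ∑ a, ft f a * (starRingEnd ℂ) (ft f a) = (p : ℂ) ^ n * ∑ m, ((f m : ℂ)) ^ 2 := by
  have step1 : ∀ a, ft f a * (starRingEnd ℂ) (ft f a)
      = ∑ m, ∑ m', (f m : ℂ) * (f m' : ℂ) * ee (dotProduct a (m - m')) := by
    intro a
    rw [conj_ft, ft_apply, Finset.sum_mul_sum]
    refine Finset.sum_congr rfl fun m _ => Finset.sum_congr rfl fun m' _ => ?_
    rw [dotProduct_sub, sub_eq_add_neg, ee_add]
    ring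
  calc ∑ a, ft f a * (starRingEnd ℂ) (ft f a)
      = ∑ a : Fin n → ZMod p, ∑ m, ∑ m', (f m : ℂ) * (f m' : ℂ)
          * ee (dotProduct a (m - m')) := Finset.sum_congr rfl fun a _ => step1 a
    _ = ∑ m, ∑ m', (f m : ℂ) * (f m' : ℂ) * ∑ a, ee (dotProduct a (m - m')) := by
        rw [Finset.sum_comm]
        refine Finset.sum_congr rfl fun m _ => ?_
        rw [Finset.sum_comm]
        exact Finset.sum_congr rfl fun m' _ => (Finset.mul_sum _ _ _).symm
    _ = ∑ m, ∑ m', (f m : ℂ) * (f m' : ℂ) * (if m - m' = 0 then ((p:ℂ))^n else 0) := by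
        refine Finset.sum_congr rfl fun m _ => Finset.sum_congr rfl fun m' _ => ?_
        rw [sum_ee_dot]
    _ = (p : ℂ) ^ n * ∑ m, ((f m : ℂ)) ^ 2 := by
        rw [Finset.mul_sum]
        refine Finset.sum_congr rfl fun m _ => ?_
        have : ∀ m' : Fin n → ZMod p, (f m : ℂ) * (f m' : ℂ) * (if m - m' = 0 then ((p:ℂ))^n else 0)
            = if m' = m then (f m : ℂ) * (f m' : ℂ) * (p:ℂ)^n else 0 := by
          intro m'
          rcases eq_or_ne m' m with h | h
          · simp [h]
          · rw [if_neg h, if_neg (fun hc => h (sub_eq_zero.mp hc).symm), mul_zero]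
        rw [Finset.sum_congr rfl fun m' _ => this m', Finset.sum_ite_eq' Finset.univ m]
        simp [sq]; ring

lemma key_identity (g : (Fin n → ZMod p) → ℝ) :
    ((∑ m, ∑ d, g m * g (m + d) * g (m + 2 • d) : ℝ) : ℂ) * (p : ℂ) ^ n
      = ∑ a, (ft g a) ^ 2 * ft g (-(a + a)) := by
  have step1 : ∀ a : Fin n → ZMod p, (ft g a) ^ 2 * ft g (-(a + a))
      = ∑ x, ∑ z, ∑ y, (g x : ℂ) * (g z : ℂ) * (g y : ℂ)
          * ee (dotProduct a (x + z - (y + y))) := by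
    intro a
    rw [sq, ft_apply, Finset.sum_mul_sum, Finset.sum_mul]
    refine Finset.sum_congr rfl fun x _ => ?_
    rw [Finset.sum_mul]
    refine Finset.sum_congr rfl fun z _ => ?_
    rw [ft_apply, Finset.mul_sum]
    refine Finset.sum_congr rfl fun y _ => ?_
    have h2 : dotProduct (-(a + a)) y
        = -(dotProduct a y) + -(dotProduct a y) := by
      rw [neg_dotProduct, add_dotProduct]; ring
    have h3 : dotProduct a (x + z - (y + y))
        = dotProduct a x + (dotProduct a z
            + (-(dotProduct a y) + -(dotProduct a y))) := by
      rw [dotProduct_sub, dotProduct_add, dotProduct_add]; ring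
    rw [h2, h3, ee_add, ee_add, ee_add, ee_add]
    ring
  symm
  calc ∑ a, (ft g a) ^ 2 * ft g (-(a + a))
      = ∑ a : Fin n → ZMod p, ∑ x, ∑ z, ∑ y, (g x : ℂ) * (g z : ℂ) * (g y : ℂ)
          * ee (dotProduct a (x + z - (y + y))) :=
        Finset.sum_congr rfl fun a _ => step1 a
    _ = ∑ x : Fin n → ZMod p, ∑ y : Fin n → ZMod p, ∑ z : Fin n → ZMod p,
          (g x : ℂ) * (g z : ℂ) * (g y : ℂ) * ∑ a, ee (dotProduct a (x + z - (y + y))) := by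
        rw [Finset.sum_comm]
        refine Finset.sum_congr rfl fun x _ => ?_
        rw [Finset.sum_comm]
        rw [show (∑ z : Fin n → ZMod p, ∑ a : Fin n → ZMod p, ∑ y : Fin n → ZMod p,
              (g x : ℂ) * (g z : ℂ) * (g y : ℂ) * ee (dotProduct a (x + z - (y + y))))
            = ∑ z : Fin n → ZMod p, ∑ y : Fin n → ZMod p, ∑ a : Fin n → ZMod p,
              (g x : ℂ) * (g z : ℂ) * (g y : ℂ) * ee (dotProduct a (x + z - (y + y)))
          from Finset.sum_congr rfl fun z _ => Finset.sum_comm]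
        rw [Finset.sum_comm]
        refine Finset.sum_congr rfl fun y _ => Finset.sum_congr rfl fun z _ => ?_
        rw [Finset.mul_sum]
    _ = ∑ x : Fin n → ZMod p, ∑ y : Fin n → ZMod p,
          (g x : ℂ) * (g (y + y - x) : ℂ) * (g y : ℂ) * (p : ℂ) ^ n := by
        refine Finset.sum_congr rfl fun x _ => Finset.sum_congr rfl fun y _ => ?_
        have h4 : ∀ z : Fin n → ZMod p,
            (g x : ℂ) * (g z : ℂ) * (g y : ℂ) * ∑ a, ee (dotProduct a (x + z - (y + y)))
              = if z = y + y - x then (g x : ℂ) * (g z : ℂ) * (g y : ℂ) * (p : ℂ) ^ n else 0 := by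
          intro z
          rw [sum_ee_dot]
          rcases eq_or_ne z (y + y - x) with h | h
          · rw [if_pos (by rw [h]; abel), if_pos h]
          · rw [if_neg (fun hc => h (eq_sub_of_add_eq' (sub_eq_zero.mp hc))), if_neg h, mul_zero]
        rw [Finset.sum_congr rfl fun z _ => h4 z, Finset.sum_ite_eq' Finset.univ (y + y - x)]
        simp
    _ = ((∑ m, ∑ d, g m * g (m + d) * g (m + 2 • d) : ℝ) : ℂ) * (p : ℂ) ^ n := by
        push_cast
        rw [Finset.sum_mul]
        refine Finset.sum_congr rfl fun m _ => ?_
        rw [Finset.sum_mul]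
        refine (Fintype.sum_equiv (Equiv.addLeft m) _ _ fun d => ?_).symm
        simp only [Equiv.coe_addLeft]
        have h5 : (m + d) + (m + d) - m = m + 2 • d := by rw [two_smul]; abel
        rw [h5]
        ring

lemma ft_avgW (W : Submodule (ZMod p) (Fin n → ZMod p)) (f : (Fin n → ZMod p) → ℝ)
    (a : Fin n → ZMod p) :
    ft (avgW W f) a = if (∀ w ∈ W, dotProduct a w = 0) then ft f a else 0 := by
  have hcard : (Nat.card W : ℂ) ≠ 0 := by
    have : 0 < Nat.card W := Nat.card_pos
    exact_mod_cast this.ne'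
  have inner : ∀ w : W, ∑ m, ((f (m + (w : Fin n → ZMod p)) : ℝ) : ℂ) * ee (dotProduct a m)
      = ee (-(dotProduct a (w : Fin n → ZMod p))) * ft f a := by
    intro w
    rw [ft_apply, Finset.mul_sum]
    refine Fintype.sum_equiv (Equiv.addRight (w : Fin n → ZMod p)) _ _ fun m => ?_
    simp only [Equiv.coe_addRight]
    have h1 : dotProduct a (m + (w : Fin n → ZMod p))
        = dotProduct a (w : Fin n → ZMod p) + dotProduct a m := by
      rw [dotProduct_add]; ring
    rw [h1, ee_add, ee_neg]
    field_simp [ee_ne_zero]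
  have expand : ft (avgW W f) a
      = (∑ w : W, ee (-(dotProduct a (w : Fin n → ZMod p)))) * ft f a / (Nat.card W : ℂ) := by
    rw [ft_apply]
    simp only [avgW, Complex.ofReal_div, Complex.ofReal_sum, Complex.ofReal_natCast]
    calc ∑ m : Fin n → ZMod p, (∑ w : W, ((f (m + (w : Fin n → ZMod p)) : ℝ) : ℂ))
            / (Nat.card W : ℂ) * ee (dotProduct a m)
        = (∑ m : Fin n → ZMod p, ∑ w : W, ((f (m + (w : Fin n → ZMod p)) : ℝ) : ℂ)
            * ee (dotProduct a m)) / (Nat.card W : ℂ) := by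
          rw [Finset.sum_div]
          refine Finset.sum_congr rfl fun m _ => ?_
          rw [div_mul_eq_mul_div, Finset.sum_mul]
      _ = (∑ w : W, ∑ m : Fin n → ZMod p, ((f (m + (w : Fin n → ZMod p)) : ℝ) : ℂ)
            * ee (dotProduct a m)) / (Nat.card W : ℂ) := by rw [Finset.sum_comm]
      _ = (∑ w : W, ee (-(dotProduct a (w : Fin n → ZMod p))) * ft f a)
            / (Nat.card W : ℂ) := by
          rw [Finset.sum_congr rfl fun w _ => inner w]
      _ = _ := by rw [Finset.sum_mul]
  rw [expand]
  have hsum : (∑ w : W, ee (-(dotProduct a (w : Fin n → ZMod p))))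
      = if (∀ w ∈ W, dotProduct a w = 0) then (Nat.card W : ℂ) else 0 := by
    have hW2 := sum_ee_W W (-a)
    have h2 : ∀ w : W, ee (dotProduct (-a) (w : Fin n → ZMod p))
        = ee (-(dotProduct a (w : Fin n → ZMod p))) := fun w => by
      rw [neg_dotProduct]
    rw [Finset.sum_congr rfl fun w _ => (h2 w).symm, hW2]
    congr 1
    simp only [neg_dotProduct, neg_eq_zero]
  rw [hsum]
  split_ifs with h
  · rw [mul_comm, mul_div_assoc, div_self hcard, mul_one]
  · rw [zero_mul, zero_div]

end aux

/-- if `V` contains all large Fourier coefficients of `f` (those `a` with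
`|f̂(a)| > Δ·pⁿ`) and `W = V^⊥`, then `Λ₃(f_W) ≤ Λ₃(f) + Δ`. -/
theorem stmt9 (p : ℕ) (hp : p.Prime) (hodd : Odd p) [NeZero p] (n : ℕ) (hn : 1 ≤ n)
    (Δ : ℝ) (hΔ : 0 < Δ)
    (f : (Fin n → ZMod p) → ℝ) (hf : ∀ m, 0 ≤ f m ∧ f m ≤ 1)
    (V : Submodule (ZMod p) (Fin n → ZMod p))
    (hV : ∀ a : Fin n → ZMod p, Δ * (p : ℝ) ^ n < ‖ft f a‖ → a ∈ V)
    (W : Submodule (ZMod p) (Fin n → ZMod p))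
    (hW : ∀ w : Fin n → ZMod p, w ∈ W ↔ ∀ v ∈ V, dotProduct w v = 0) :
    lambda3 (avgW W f) ≤ lambda3 f + Δ := by
  classical
  haveI := Fact.mk hp
  set g : (Fin n → ZMod p) → ℝ := avgW W f with hgdef
  have hppos : (0:ℝ) < (p:ℝ) := by exact_mod_cast hp.pos
  have hPn : (0:ℝ) < (p:ℝ)^n := pow_pos hppos n
  -- the perp predicate
  have hVP : ∀ a ∈ V, (∀ w ∈ W, dotProduct a w = 0) := by
    intro a ha w hw
    rw [dotProduct_comm]
    exact (hW w).mp hw a ha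
  have hPcl : ∀ a : Fin n → ZMod p, (∀ w ∈ W, dotProduct a w = 0) →
      (∀ w ∈ W, dotProduct (-(a+a)) w = 0) := by
    intro a hPa w hw
    rw [neg_dotProduct, add_dotProduct, hPa w hw]
    simp
  have termEq : ∀ a : Fin n → ZMod p, (ft g a)^2 * ft g (-(a+a))
      = if (∀ w ∈ W, dotProduct a w = 0) then (ft f a)^2 * ft f (-(a+a)) else 0 := by
    intro a
    rw [hgdef, ft_avgW, ft_avgW]
    by_cases h : ∀ w ∈ W, dotProduct a w = 0
    · rw [if_pos h, if_pos (hPcl a h), if_pos h]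
    · rw [if_neg h, if_neg h]
      ring
  -- the difference
  have hdiff : ((((∑ m : Fin n → ZMod p, ∑ d : Fin n → ZMod p, f m * f (m + d) * f (m + 2 • d))
        - (∑ m : Fin n → ZMod p, ∑ d : Fin n → ZMod p, g m * g (m + d) * g (m + 2 • d))) : ℝ) : ℂ) * (p:ℂ)^n
      = ∑ a : Fin n → ZMod p, (if (∀ w ∈ W, dotProduct a w = 0) then 0
          else (ft f a)^2 * ft f (-(a+a))) := by
    rw [Complex.ofReal_sub, sub_mul, key_identity f, key_identity g,
      ← Finset.sum_sub_distrib]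
    refine Finset.sum_congr rfl fun a _ => ?_
    rw [termEq a]
    by_cases h : ∀ w ∈ W, dotProduct a w = 0
    · rw [if_pos h, if_pos h, sub_self]
    · rw [if_neg h, if_neg h, sub_zero]
  -- pointwise bound
  have habs : ∀ a : Fin n → ZMod p, ‖if (∀ w ∈ W, dotProduct a w = 0) then 0
        else (ft f a)^2 * ft f (-(a+a))‖
      ≤ Δ * (p:ℝ)^n * ((‖ft f a‖)^2 + (‖ft f (-(a+a))‖)^2) / 2 := by
    intro a
    by_cases h : ∀ w ∈ W, dotProduct a w = 0
    · rw [if_pos h, norm_zero]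
      positivity
    · rw [if_neg h]
      have hanotV : a ∉ V := fun hav => h (hVP a hav)
      have hle : ‖ft f a‖ ≤ Δ * (p:ℝ)^n :=
        le_of_not_gt fun hlt => hanotV (hV a hlt)
      rw [norm_mul, norm_pow]
      have hx0 : 0 ≤ ‖ft f a‖ := norm_nonneg _
      have hy0 : 0 ≤ ‖ft f (-(a+a))‖ := norm_nonneg _
      nlinarith [mul_nonneg hx0 (sq_nonneg (‖ft f a‖ - ‖ft f (-(a+a))‖)),
        mul_nonneg (sub_nonneg.mpr hle)
          (add_nonneg (sq_nonneg (‖ft f a‖)) (sq_nonneg (‖ft f (-(a+a))‖)))]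
  -- Parseval
  have hpar : ∑ a : Fin n → ZMod p, (‖ft f a‖)^2 = (p:ℝ)^n * ∑ m : Fin n → ZMod p, (f m)^2 := by
    have h1 := parseval_c f
    have h2 : ((∑ a : Fin n → ZMod p, (‖ft f a‖)^2 : ℝ) : ℂ)
        = ∑ a : Fin n → ZMod p, ft f a * (starRingEnd ℂ) (ft f a) := by
      push_cast
      refine Finset.sum_congr rfl fun a _ => ?_
      rw [← Complex.ofReal_pow, Complex.sq_norm, Complex.mul_conj]
    have h3 : ((∑ a : Fin n → ZMod p, (‖ft f a‖)^2 : ℝ) : ℂ)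
        = (((p:ℝ)^n * ∑ m : Fin n → ZMod p, (f m)^2 : ℝ) : ℂ) := by
      rw [h2, h1]
      push_cast
      ring
    exact_mod_cast h3
  have hsum2 : ∑ m : Fin n → ZMod p, (f m)^2 ≤ (p:ℝ)^n := by
    calc ∑ m : Fin n → ZMod p, (f m)^2 ≤ ∑ _m : Fin n → ZMod p, (1:ℝ) := by
          refine Finset.sum_le_sum fun m _ => ?_
          have := hf m
          nlinarith [this.1, this.2]
      _ = (p:ℝ)^n := by
          simp only [Finset.sum_const, Finset.card_univ, nsmul_eq_mul, mul_one]
          simp [ZMod.card]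
  have hparle : ∑ a : Fin n → ZMod p, (‖ft f a‖)^2 ≤ (p:ℝ)^n * (p:ℝ)^n := by
    rw [hpar]
    exact mul_le_mul_of_nonneg_left hsum2 (le_of_lt hPn)
  -- bijection a ↦ -(a+a)
  have h2ne : (2 : ZMod p) ≠ 0 := by
    intro h2z
    have hdvd : p ∣ 2 := by
      have : ((2:ℕ) : ZMod p) = 0 := by exact_mod_cast h2z
      exact (ZMod.natCast_eq_zero_iff 2 p).mp this
    have hp2 : p = 2 := (Nat.prime_dvd_prime_iff_eq hp Nat.prime_two).mp hdvd
    rcases hodd with ⟨k, hk⟩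
    omega
  have hbij : ∑ a : Fin n → ZMod p, (‖ft f (-(a+a))‖)^2
      = ∑ a : Fin n → ZMod p, (‖ft f a‖)^2 := by
    have hinj : Function.Injective (fun a : Fin n → ZMod p => -(a + a)) := by
      intro a b hab
      simp only at hab
      have h1 : a + a = b + b := neg_inj.mp hab
      funext i
      have h2 := congrFun h1 i
      have h3 : (2:ZMod p) * a i = (2:ZMod p) * b i := by
        rw [two_mul, two_mul]
        exact h2
      exact mul_left_cancel₀ h2ne h3
    exact Fintype.sum_bijective _ (Finite.injective_iff_bijective.mp hinj) _ _ (fun a => rfl)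
  -- total bound
  have hSbound : ‖((((∑ m : Fin n → ZMod p, ∑ d : Fin n → ZMod p, f m * f (m + d) * f (m + 2 • d))
        - (∑ m : Fin n → ZMod p, ∑ d : Fin n → ZMod p, g m * g (m + d) * g (m + 2 • d))) : ℝ) : ℂ) * (p:ℂ)^n‖
      ≤ Δ * (p:ℝ)^n * ((p:ℝ)^n * (p:ℝ)^n) := by
    rw [hdiff]
    calc ‖∑ a : Fin n → ZMod p, (if (∀ w ∈ W, dotProduct a w = 0) then 0
            else (ft f a)^2 * ft f (-(a+a)))‖
        ≤ ∑ a : Fin n → ZMod p, ‖if (∀ w ∈ W, dotProduct a w = 0) then 0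
            else (ft f a)^2 * ft f (-(a+a))‖ := norm_sum_le _ _
      _ ≤ ∑ a : Fin n → ZMod p, Δ * (p:ℝ)^n * ((‖ft f a‖)^2
            + (‖ft f (-(a+a))‖)^2) / 2 :=
          Finset.sum_le_sum fun a _ => habs a
      _ = Δ * (p:ℝ)^n * ((∑ a : Fin n → ZMod p, (‖ft f a‖)^2)
            + ∑ a : Fin n → ZMod p, (‖ft f (-(a+a))‖)^2) / 2 := by
          rw [← Finset.sum_div, ← Finset.mul_sum, Finset.sum_add_distrib]
      _ = Δ * (p:ℝ)^n * (∑ a : Fin n → ZMod p, (‖ft f a‖)^2) := by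
          rw [hbij]
          ring
      _ ≤ Δ * (p:ℝ)^n * ((p:ℝ)^n * (p:ℝ)^n) := by
          refine mul_le_mul_of_nonneg_left hparle ?_
          positivity
  -- convert to real bound
  have habs2 : |(∑ m : Fin n → ZMod p, ∑ d : Fin n → ZMod p, f m * f (m + d) * f (m + 2 • d))
        - (∑ m : Fin n → ZMod p, ∑ d : Fin n → ZMod p, g m * g (m + d) * g (m + 2 • d))| * (p:ℝ)^n
      ≤ Δ * (p:ℝ)^n * ((p:ℝ)^n * (p:ℝ)^n) := by
    have := hSbound
    rwa [norm_mul, Complex.norm_real, Real.norm_eq_abs, norm_pow, Complex.norm_natCast] at this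
  have hfinal : (∑ m : Fin n → ZMod p, ∑ d : Fin n → ZMod p, g m * g (m + d) * g (m + 2 • d))
      ≤ (∑ m : Fin n → ZMod p, ∑ d : Fin n → ZMod p, f m * f (m + d) * f (m + 2 • d)) + Δ * ((p:ℝ)^n * (p:ℝ)^n) := by
    set A := (∑ m : Fin n → ZMod p, ∑ d : Fin n → ZMod p, f m * f (m + d) * f (m + 2 • d))
    set B := (∑ m : Fin n → ZMod p, ∑ d : Fin n → ZMod p, g m * g (m + d) * g (m + 2 • d))
    have hd : |A - B| ≤ Δ * ((p:ℝ)^n * (p:ℝ)^n) := by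
      have h' : |A - B| * (p:ℝ)^n ≤ (Δ * ((p:ℝ)^n * (p:ℝ)^n)) * (p:ℝ)^n := by
        calc |A - B| * (p:ℝ)^n ≤ Δ * (p:ℝ)^n * ((p:ℝ)^n * (p:ℝ)^n) := habs2
          _ = (Δ * ((p:ℝ)^n * (p:ℝ)^n)) * (p:ℝ)^n := by ring
      exact le_of_mul_le_mul_right h' hPn
    have := neg_abs_le (A - B)
    linarith [hd, this]
  -- conclude
  have h2n : (p:ℝ)^(2*n) = (p:ℝ)^n * (p:ℝ)^n := by
    rw [two_mul, pow_add]
  have h2npos : (0:ℝ) < (p:ℝ)^(2*n) := pow_pos hppos _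
  rw [lambda3, lambda3]
  rw [div_le_iff₀ h2npos]
  have : (((∑ m : Fin n → ZMod p, ∑ d : Fin n → ZMod p, f m * f (m + d) * f (m + 2 • d)) / (p:ℝ)^(2*n) + Δ) * (p:ℝ)^(2*n))
      = (∑ m : Fin n → ZMod p, ∑ d : Fin n → ZMod p, f m * f (m + d) * f (m + 2 • d)) + Δ * (p:ℝ)^(2*n) := by
    field_simp
  rw [this, h2n]
  exact hfinal
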